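/- In the Witt-vector setting below, let (D_i)_{i∈ℤ} be a grading of D = Lⁿ (finitely many nonzero subspaces with D = ⊕_i D_i), F^i = Σ_{j≥i} D_j, δ : D → D the linear automorphism acting as multiplication by p^i on D_i, and for b ∈ GL_n(L) let φ = (v ↦ b·v) ∘ σ_D. If M is an O-lattice in D that is graded (M = Σ_i (M ∩ D_i)) and strongly divisible (M = Σ_{i∈ℤ} p^{-i}·φ(F^i ∩ M)), then M = φ(δ⁻¹(M)), i.e. M = b · σ_D(δ⁻¹(M)). -/

import Mathlib

section Aux
variable (p : ℕ) [Fact p.Prime] (k : Type*) [Field k] [IsAlgClosed k] [CharP k p]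
variable (L : Type*) [Field L] [Algebra (WittVector p k) L] [IsFractionRing (WittVector p k) L]

instance frobSurj : RingHomSurjective (WittVector.frobeniusEquiv p k).toRingHom :=
  ⟨(WittVector.frobeniusEquiv p k).surjective⟩

variable {n : ℕ}

noncomputable def phiMap (σ : L ≃+* L)
    (hσ : ∀ x : WittVector p k,
      σ (algebraMap (WittVector p k) L x)
        = algebraMap (WittVector p k) L (WittVector.frobeniusEquiv p k x))
    (b : Matrix.GeneralLinearGroup (Fin n) L) :
    (Fin n → L) →ₛₗ[(WittVector.frobeniusEquiv p k).toRingHom] (Fin n → L) where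
  toFun v := (b : Matrix (Fin n) (Fin n) L).mulVec (fun j => σ (v j))
  map_add' x y := by
    show (b : Matrix (Fin n) (Fin n) L).mulVec (fun j => σ ((x + y) j)) = _
    have : (fun j => σ ((x + y) j)) = (fun j => σ (x j)) + fun j => σ (y j) := by
      funext j; simp
    rw [this, Matrix.mulVec_add]
  map_smul' a v := by
    show (b : Matrix (Fin n) (Fin n) L).mulVec (fun j => σ ((a • v) j)) = _
    have : (fun j => σ ((a • v) j))
        = (algebraMap (WittVector p k) L ((WittVector.frobeniusEquiv p k) a)) • fun j => σ (v j) := by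
      funext j
      simp [Pi.smul_apply, Algebra.smul_def, map_mul, hσ, smul_eq_mul]
    rw [this, Matrix.mulVec_smul, algebraMap_smul]
    rfl

variable (σ : L ≃+* L)
    (hσ : ∀ x : WittVector p k,
      σ (algebraMap (WittVector p k) L x)
        = algebraMap (WittVector p k) L (WittVector.frobeniusEquiv p k x))
    (b : Matrix.GeneralLinearGroup (Fin n) L)

set_option linter.unusedSectionVars false

theorem phiMap_apply (v : Fin n → L) :
    phiMap p k L σ hσ b v = (b : Matrix (Fin n) (Fin n) L).mulVec (fun j => σ (v j)) := rfl

theorem phiMap_smulL (c : L) (v : Fin n → L) :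
    phiMap p k L σ hσ b (c • v) = σ c • phiMap p k L σ hσ b v := by
  rw [phiMap_apply, phiMap_apply]
  have : (fun j => σ ((c • v) j)) = σ c • fun j => σ (v j) := by
    funext j; simp [smul_eq_mul]
  rw [this, Matrix.mulVec_smul]

noncomputable def gMap (i : ℤ) :
    (Fin n → L) →ₛₗ[(WittVector.frobeniusEquiv p k).toRingHom] (Fin n → L) :=
  ((p : L) ^ (-i)) • phiMap p k L σ hσ b

theorem gMap_apply (i : ℤ) (v : Fin n → L) :
    gMap p k L σ hσ b i v = ((p : L) ^ (-i)) • phiMap p k L σ hσ b v := rfl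

variable (D : ℤ → Submodule L (Fin n → L)) (M : Submodule (WittVector p k) (Fin n → L))

noncomputable def Sm (i : ℤ) : Submodule (WittVector p k) (Fin n → L) :=
  M ⊓ (D i).restrictScalars (WittVector p k)

noncomputable def Fsub (i : ℤ) : Submodule L (Fin n → L) := ⨆ j ∈ {j : ℤ | i ≤ j}, D j

noncomputable def FMsub (i : ℤ) : Submodule (WittVector p k) (Fin n → L) :=
  (Fsub L D i).restrictScalars (WittVector p k) ⊓ M

noncomputable def proj (hD : DirectSum.IsInternal D) (j : ℤ) :
    (Fin n → L) →ₗ[L] (Fin n → L) :=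
  (D j).subtype ∘ₗ DirectSum.component L ℤ (fun i => (D i : Submodule L (Fin n → L))) j ∘ₗ
    (LinearEquiv.ofBijective (DirectSum.coeLinearMap D) hD).symm.toLinearMap

theorem proj_apply (hD : DirectSum.IsInternal D) (j : ℤ) (x : Fin n → L) :
    proj L D hD j x
      = (((LinearEquiv.ofBijective (DirectSum.coeLinearMap D) hD).symm x) j : Fin n → L) := rfl

theorem proj_mem (hD : DirectSum.IsInternal D) (j : ℤ) (x : Fin n → L) :
    proj L D hD j x ∈ D j :=
  (((LinearEquiv.ofBijective (DirectSum.coeLinearMap D) hD).symm x) j).2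

theorem proj_of_mem_same (hD : DirectSum.IsInternal D) {j : ℤ} {x : Fin n → L} (hx : x ∈ D j) :
    proj L D hD j x = x := by
  rw [proj_apply, hD.ofBijective_coeLinearMap_of_mem hx]

theorem proj_of_mem_ne (hD : DirectSum.IsInternal D) {i j : ℤ} {x : Fin n → L} (hx : x ∈ D i)
    (hij : i ≠ j) : proj L D hD j x = 0 := by
  rw [proj_apply, hD.ofBijective_coeLinearMap_of_mem_ne hij hx]
  rfl

open scoped Classical in
theorem proj_sum (hD : DirectSum.IsInternal D) (x : Fin n → L) :
    ∑ j ∈ ((LinearEquiv.ofBijective (DirectSum.coeLinearMap D) hD).symm x).support,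
      proj L D hD j x = x := by
  classical
  conv_rhs => rw [← (LinearEquiv.ofBijective (DirectSum.coeLinearMap D) hD).apply_symm_apply x]
  rw [show ⇑(LinearEquiv.ofBijective (DirectSum.coeLinearMap D) hD)
      = ⇑(DirectSum.coeLinearMap D) from rfl]
  rw [DirectSum.coeLinearMap_eq_dfinsuppSum]
  rw [DFinsupp.sum]
  rfl

end Aux



/-- Lemma 2.8 (lemme fd) of the paper, for the standard representation of GL_n:
a strongly divisible lattice compatible with the grading satisfies
`M = b · σ_D(δ⁻¹(M))`, i.e. `M = ρ(c) σ(M)` with `c = b·σ(μ(p⁻¹))`. -/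
theorem strongly_divisible_lattice_eq_phi_delta_inv
    (p : ℕ) [Fact p.Prime] (k : Type*) [Field k] [IsAlgClosed k] [CharP k p]
    (L : Type*) [Field L] [Algebra (WittVector p k) L] [IsFractionRing (WittVector p k) L]
    -- σ : the automorphism of L induced by the Witt vector Frobenius :
    (σ : L ≃+* L)
    (hσ : ∀ x : WittVector p k,
      σ (algebraMap (WittVector p k) L x)
        = algebraMap (WittVector p k) L (WittVector.frobeniusEquiv p k x))
    (n : ℕ)
    -- a grading of D = Lⁿ with finitely many nonzero pieces :
    (D : ℤ → Submodule L (Fin n → L))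
    (hDfin : {i : ℤ | D i ≠ ⊥}.Finite)
    (hD : DirectSum.IsInternal D)
    -- δ acts as multiplication by p^i on D_i :
    (δ : (Fin n → L) ≃ₗ[L] (Fin n → L))
    (hδ : ∀ i : ℤ, ∀ v ∈ D i, δ v = ((p : L) ^ i) • v)
    (b : Matrix.GeneralLinearGroup (Fin n) L)
    -- M an O-lattice in D :
    (M : Submodule (WittVector p k) (Fin n → L))
    (hMfg : M.FG)
    (hMspan : Submodule.span L (M : Set (Fin n → L)) = ⊤)
    -- M is graded : M = Σ_i (M ∩ D_i) :
    (hMgr : M = ⨆ i : ℤ, (M ⊓ (D i).restrictScalars (WittVector p k)))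
    -- M is strongly divisible : M = Σ_i p^{-i}·φ(F^i ∩ M), with φ v = b·σ_D(v) :
    (hMsd : M = ⨆ i : ℤ, Submodule.span (WittVector p k)
      ((fun v : Fin n → L => ((p : L) ^ (-i)) •
          (b : Matrix (Fin n) (Fin n) L).mulVec (fun j => σ (v j))) ''
        ((((⨆ j ∈ {j : ℤ | i ≤ j}, D j : Submodule L (Fin n → L))) : Set (Fin n → L))
          ∩ (M : Set (Fin n → L))))) :
    (M : Set (Fin n → L)) =
      (fun v : Fin n → L =>
        (b : Matrix (Fin n) (Fin n) L).mulVec (fun j => σ (v j))) ''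
        (δ.symm '' (M : Set (Fin n → L))) := by
  classical
  have hp : (p : L) ≠ 0 := by
    simpa using (IsFractionRing.injective (WittVector p k) L).ne (WittVector.p_nonzero p k)
  have hσp : σ (p : L) = p := by
    rw [← map_natCast (algebraMap (WittVector p k) L) p, hσ, map_natCast, map_natCast]
  have hσpz : ∀ i : ℤ, σ ((p : L) ^ i) = (p : L) ^ i := fun i => by
    rw [map_zpow₀, hσp]
  -- restate strong divisibility with maps
  have hspan : ∀ i : ℤ, Submodule.span (WittVector p k)
      ((fun v : Fin n → L => ((p : L) ^ (-i)) •
          (b : Matrix (Fin n) (Fin n) L).mulVec (fun j => σ (v j))) ''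
        ((((⨆ j ∈ {j : ℤ | i ≤ j}, D j : Submodule L (Fin n → L))) : Set (Fin n → L))
          ∩ (M : Set (Fin n → L))))
      = Submodule.map (gMap p k L σ hσ b i) (FMsub p k L D M i) := by
    intro i
    have h1 : (fun v : Fin n → L => ((p : L) ^ (-i)) •
          (b : Matrix (Fin n) (Fin n) L).mulVec (fun j => σ (v j)))
        = ⇑(gMap p k L σ hσ b i) := rfl
    have h2 : ((((⨆ j ∈ {j : ℤ | i ≤ j}, D j : Submodule L (Fin n → L))) : Set (Fin n → L))
          ∩ (M : Set (Fin n → L))) = ↑(FMsub p k L D M i) := rfl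
    rw [h1, h2, ← Submodule.map_coe, Submodule.span_eq]
  have hMsd' : M = ⨆ i, Submodule.map (gMap p k L σ hσ b i) (FMsub p k L D M i) :=
    hMsd.trans (iSup_congr hspan)
  have hMgr' : M = ⨆ i, Sm p k L D M i := hMgr
  -- projections preserve M
  have hπM : ∀ (j : ℤ) (x : Fin n → L), x ∈ M → proj L D hD j x ∈ M := by
    intro j
    have hle : M ≤ Submodule.comap ((proj L D hD j).restrictScalars (WittVector p k)) M := by
      conv_lhs => rw [hMgr]
      refine iSup_le fun i => ?_
      rintro x ⟨hxM, hxD⟩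
      by_cases hij : i = j
      · subst hij
        simpa [Submodule.mem_comap, proj_of_mem_same L D hD hxD] using hxM
      · simp [Submodule.mem_comap, proj_of_mem_ne L D hD hxD hij]
    exact fun x hx => hle hx
  -- projections vanish on F i for low indices
  have hFπ : ∀ i j : ℤ, j < i → ∀ x ∈ Fsub L D i, proj L D hD j x = 0 := by
    intro i j hji x hx
    have hker : Fsub L D i ≤ LinearMap.ker (proj L D hD j) := by
      refine iSup₂_le fun j' hj' => fun y hy => LinearMap.mem_ker.2 ?_
      have hij : j' ≠ j := by
        have : i ≤ j' := hj'
        omega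
      exact proj_of_mem_ne L D hD hy hij
    exact LinearMap.mem_ker.1 (hker hx)
  -- relation between the g i
  have hgrel : ∀ i j : ℤ, i ≤ j → ∀ v : Fin n → L,
      gMap p k L σ hσ b i v = ((p : WittVector p k) ^ (j - i).toNat) • gMap p k L σ hσ b j v := by
    intro i j hij v
    rw [gMap_apply, gMap_apply,
      ← algebraMap_smul L ((p : WittVector p k) ^ (j - i).toNat), smul_smul]
    congr 1
    rw [map_pow, map_natCast, ← zpow_natCast, Int.toNat_of_nonneg (by omega : (0:ℤ) ≤ j - i),
      ← zpow_add₀ hp]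
    congr 1
    omega
  -- the key identity
  have key : M = ⨆ i, Submodule.map (gMap p k L σ hσ b i) (Sm p k L D M i) := by
    refine le_antisymm (hMsd'.trans_le (iSup_le fun i => ?_)) (iSup_le fun j => ?_)
    · rintro _ ⟨x, ⟨hxF, hxM⟩, rfl⟩
      have hxsum : gMap p k L σ hσ b i x
          = ∑ j ∈ ((LinearEquiv.ofBijective (DirectSum.coeLinearMap D) hD).symm x).support,
              gMap p k L σ hσ b i (proj L D hD j x) := by
        conv_lhs => rw [← proj_sum L D hD x]
        rw [map_sum]
      rw [hxsum]
      refine Submodule.sum_mem _ fun j _ => ?_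
      by_cases hij : i ≤ j
      · rw [hgrel i j hij]
        refine Submodule.smul_mem _ _ ?_
        refine le_iSup (fun j => Submodule.map (gMap p k L σ hσ b j) (Sm p k L D M j)) j ?_
        exact ⟨proj L D hD j x, ⟨hπM j x hxM, proj_mem L D hD j x⟩, rfl⟩
      · rw [hFπ i j (by omega) x hxF, map_zero]
        exact zero_mem _
    · have h1 : Sm p k L D M j ≤ FMsub p k L D M j := by
        rintro x ⟨hxM, hxD⟩
        refine ⟨?_, hxM⟩
        exact (le_iSup₂ (f := fun j' (_ : j' ∈ {j' : ℤ | j ≤ j'}) => D j') j (Set.mem_setOf.2 (le_refl j))) hxD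
      calc Submodule.map (gMap p k L σ hσ b j) (Sm p k L D M j)
          ≤ Submodule.map (gMap p k L σ hσ b j) (FMsub p k L D M j) := Submodule.map_mono h1
        _ ≤ ⨆ i, Submodule.map (gMap p k L σ hσ b i) (FMsub p k L D M i) :=
            le_iSup (fun i => Submodule.map (gMap p k L σ hσ b i) (FMsub p k L D M i)) j
        _ = M := hMsd'.symm
  -- δ.symm on D i
  have hδsymm : ∀ i : ℤ, ∀ v ∈ D i, δ.symm v = ((p : L) ^ (-i)) • v := by
    intro i v hv
    rw [LinearEquiv.symm_apply_eq, map_smul, hδ i v hv, smul_smul, ← zpow_add₀ hp,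
      neg_add_cancel, zpow_zero, one_smul]
  set δO : (Fin n → L) →ₗ[WittVector p k] (Fin n → L) :=
    ((δ.symm : (Fin n → L) →ₗ[L] (Fin n → L)).restrictScalars (WittVector p k)) with hδOdef
  have hmapi : ∀ i, Submodule.map (phiMap p k L σ hσ b) (Submodule.map δO (Sm p k L D M i))
      = Submodule.map (gMap p k L σ hσ b i) (Sm p k L D M i) := by
    intro i
    have hcomp : ∀ v ∈ Sm p k L D M i, phiMap p k L σ hσ b (δO v) = gMap p k L σ hσ b i v := by
      intro v hv
      have : δO v = ((p : L) ^ (-i)) • v := hδsymm i v hv.2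
      rw [this, phiMap_smulL, hσpz, gMap_apply]
    ext x
    simp only [Submodule.mem_map]
    constructor
    · rintro ⟨y, ⟨v, hv, rfl⟩, rfl⟩
      exact ⟨v, hv, (hcomp v hv).symm⟩
    · rintro ⟨v, hv, rfl⟩
      exact ⟨δO v, ⟨v, hv, rfl⟩, hcomp v hv⟩
  have hfinal : Submodule.map (phiMap p k L σ hσ b) (Submodule.map δO M) = M := by
    conv_lhs => rw [hMgr']
    rw [Submodule.map_iSup, Submodule.map_iSup]
    rw [iSup_congr hmapi]
    exact key.symm
  -- conclude
  show (M : Set (Fin n → L)) = ⇑(phiMap p k L σ hσ b) '' (⇑δO '' (M : Set (Fin n → L)))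
  rw [← Submodule.map_coe, ← Submodule.map_coe, hfinal]
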